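/- Transport invariance of the weight ζ (Lemma 'rt lemma 1'): Let R₁, R₂, ε > 0. At every point (η,φ,ψ) with 0 ≤ εη < min(R₁,R₂), φ ∈ (−π/2, π/2) and ψ ∈ ℝ at which ζ(η,φ,ψ) > 0, the function ζ is differentiable in (η,φ) and satisfies sin φ · ∂ζ/∂η + F(η,ψ) cos φ · ∂ζ/∂φ = 0. -/

import Mathlib

noncomputable section

open Real Set MeasureTheory

namespace MilneStmt

/-- The geometric force `F(η,ψ)`. -/
def force (R₁ R₂ ε η ψ : ℝ) : ℝ :=
  -ε * (Real.sin ψ ^ 2 / (R₁ - ε * η) + Real.cos ψ ^ 2 / (R₂ - ε * η))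

/-- The potential `V(η,ψ)`, with `V(0,ψ) = 0` and `∂V/∂η = -F(η,ψ)`. -/
def potential (R₁ R₂ ε η ψ : ℝ) : ℝ :=
  Real.sin ψ ^ 2 * Real.log (R₁ / (R₁ - ε * η))
    + Real.cos ψ ^ 2 * Real.log (R₂ / (R₂ - ε * η))

/-- The weight `ζ(η,φ,ψ) = (1 - e^{-2V(η,ψ)} cos²φ)^{1/2}`. -/
def zetaWeight (R₁ R₂ ε : ℝ) (p : ℝ × ℝ × ℝ) : ℝ :=
  Real.sqrt (1 - Real.exp (-2 * potential R₁ R₂ ε p.1 p.2.2) * Real.cos p.2.1 ^ 2)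

lemma log_hasDerivAt (R ε η : ℝ) (hR : 0 < R) (ha : 0 < R - ε * η) :
    HasDerivAt (fun t => Real.log (R / (R - ε * t))) (ε / (R - ε * η)) η := by
  have hg : HasDerivAt (fun t => R - ε * t) (-ε) η := by
    have := (hasDerivAt_const η R).sub ((hasDerivAt_id η).const_mul ε)
    exact this.congr_deriv (by ring)
  have hlog : HasDerivAt (fun t => Real.log (R - ε * t)) ((R - ε * η)⁻¹ * (-ε)) η :=
    by have := (Real.hasDerivAt_log (ne_of_gt ha)).comp η hg; exact this
  have h2 : HasDerivAt (fun t => Real.log R - Real.log (R - ε * t))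
      (ε / (R - ε * η)) η := by
    have := (hasDerivAt_const η (Real.log R)).sub hlog
    refine this.congr_deriv ?_
    ring
  apply h2.congr_of_eventuallyEq
  have hev : ∀ᶠ t in nhds η, 0 < R - ε * t := by
    have hc : ContinuousAt (fun t => R - ε * t) η := by fun_prop
    exact hc.eventually (eventually_gt_nhds ha)
  filter_upwards [hev] with t ht
  rw [Real.log_div (ne_of_gt hR) (ne_of_gt ht)]

/-- Lemma "rt lemma 1": transport invariance of the weight `ζ`. -/
theorem zeta_transport_invariance (R₁ R₂ ε : ℝ) (hR₁ : 0 < R₁) (hR₂ : 0 < R₂)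
    (hε : 0 < ε) (η φ ψ : ℝ) (hη₀ : 0 ≤ ε * η) (hη₁ : ε * η < min R₁ R₂)
    (hφ : φ ∈ Ioo (-(π / 2)) (π / 2))
    (hζ : 0 < zetaWeight R₁ R₂ ε (η, φ, ψ)) :
    DifferentiableAt ℝ (fun t => zetaWeight R₁ R₂ ε (t, φ, ψ)) η ∧
    DifferentiableAt ℝ (fun t => zetaWeight R₁ R₂ ε (η, t, ψ)) φ ∧
    Real.sin φ * deriv (fun t => zetaWeight R₁ R₂ ε (t, φ, ψ)) η
      + force R₁ R₂ ε η ψ * Real.cos φ * deriv (fun t => zetaWeight R₁ R₂ ε (η, t, ψ)) φ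
      = 0 := by
  have ha : 0 < R₁ - ε * η := by
    have := lt_min_iff.mp hη₁; linarith [this.1]
  have hb : 0 < R₂ - ε * η := by
    have := lt_min_iff.mp hη₁; linarith [this.2]
  set F := force R₁ R₂ ε η ψ with hF
  set V := potential R₁ R₂ ε η ψ with hV
  set K := Real.exp (-2 * V) with hK
  have hKpos : 0 < K := Real.exp_pos _
  -- derivative of potential in η
  have hVd : HasDerivAt (fun t => potential R₁ R₂ ε t ψ) (-F) η := by
    have h1 := (log_hasDerivAt R₁ ε η hR₁ ha).const_mul (Real.sin ψ ^ 2)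
    have h2 := (log_hasDerivAt R₂ ε η hR₂ hb).const_mul (Real.cos ψ ^ 2)
    have := h1.add h2
    refine this.congr_deriv ?_
    simp only [hF, force]
    ring
  -- inner function in η and its derivative
  have hu : HasDerivAt (fun t => 1 - Real.exp (-2 * potential R₁ R₂ ε t ψ) * Real.cos φ ^ 2)
      (-2 * F * K * Real.cos φ ^ 2) η := by
    have hexp : HasDerivAt (fun t => Real.exp (-2 * potential R₁ R₂ ε t ψ))
        (Real.exp (-2 * V) * (-2 * -F)) η := (hVd.const_mul (-2)).exp
    have := (hasDerivAt_const η (1:ℝ)).sub (hexp.mul_const (Real.cos φ ^ 2))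
    refine this.congr_deriv ?_
    simp only [hK]
    ring
  -- positivity of inner value
  have hupos : 0 < 1 - K * Real.cos φ ^ 2 := by
    have := Real.sqrt_pos.mp hζ
    simpa [zetaWeight, hK, hV] using this
  have hune : (1 : ℝ) - K * Real.cos φ ^ 2 ≠ 0 := ne_of_gt hupos
  set ζ := Real.sqrt (1 - K * Real.cos φ ^ 2) with hz
  have hζpos : 0 < ζ := Real.sqrt_pos.mpr hupos
  -- derivative of ζ in η
  have hdη : HasDerivAt (fun t => zetaWeight R₁ R₂ ε (t, φ, ψ))
      (1 / (2 * ζ) * (-2 * F * K * Real.cos φ ^ 2)) η := by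
    have := (Real.hasDerivAt_sqrt hune).comp η hu
    simpa [zetaWeight, hK, hV, hz, Function.comp_def] using this
  -- derivative of ζ in φ
  have hw : HasDerivAt (fun t => 1 - K * Real.cos t ^ 2)
      (2 * K * Real.cos φ * Real.sin φ) φ := by
    have hc : HasDerivAt (fun t => Real.cos t ^ 2)
        (2 * Real.cos φ ^ 1 * -Real.sin φ) φ := (Real.hasDerivAt_cos φ).pow 2
    have := (hasDerivAt_const φ (1:ℝ)).sub (hc.const_mul K)
    refine this.congr_deriv ?_
    ring
  have hdφ : HasDerivAt (fun t => zetaWeight R₁ R₂ ε (η, t, ψ))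
      (1 / (2 * ζ) * (2 * K * Real.cos φ * Real.sin φ)) φ := by
    have := (Real.hasDerivAt_sqrt hune).comp φ hw
    simpa [zetaWeight, hK, hV, hz, Function.comp_def] using this
  refine ⟨hdη.differentiableAt, hdφ.differentiableAt, ?_⟩
  rw [hdη.deriv, hdφ.deriv]
  field_simp
  ring
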